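/- Let H(x1, x2) = (e^{x1} − e^{x2} − 1)_+. For ε = (ε1, ε2) with ε2 > 0 and ε1 + ε2 < −1, the damped payoff e^{ε·x} H(x) is absolutely integrable over ℝ². -/
import Mathlib


open Real MeasureTheory

lemma integrable_exp_neg_abs_aux {b : ℝ} (hb : 0 < b) :
    Integrable (fun x : ℝ => Real.exp (-b * |x|)) := by
  rw [← integrableOn_univ, ← @Set.Iio_union_Ici _ _ (0 : ℝ), integrableOn_union,
    integrableOn_Ici_iff_integrableOn_Ioi]
  have hIoi : IntegrableOn (fun x : ℝ => Real.exp (-b * |x|)) (Set.Ioi 0) := by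
    refine (exp_neg_integrableOn_Ioi 0 hb).congr_fun ?_ measurableSet_Ioi
    intro x hx
    simp [abs_of_pos (Set.mem_Ioi.mp hx)]
  refine ⟨?_, hIoi⟩
  rw [← (Measure.measurePreserving_neg (volume : Measure ℝ)).integrableOn_comp_preimage
      (Homeomorph.neg ℝ).measurableEmbedding]
  simp only [Function.comp_def, abs_neg, Set.neg_preimage, Set.neg_Iio, neg_neg, neg_zero]
  exact hIoi

/-- For ε = (ε1, ε2) with ε2 > 0 and ε1 + ε2 < −1, the damped spread payoff
`e^{ε·x} (e^{x1} − e^{x2} − 1)_+` is absolutely integrable over ℝ². -/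
theorem damped_spread_payoff_integrable (ε1 ε2 : ℝ) (hε2 : 0 < ε2) (hε : ε1 + ε2 < -1) :
    Integrable
      (fun x : ℝ × ℝ => Real.exp (ε1 * x.1 + ε2 * x.2) * max (Real.exp x.1 - Real.exp x.2 - 1) 0)
      (volume : Measure (ℝ × ℝ)) := by
  set a : ℝ := -(ε1 + ε2 + 1) with ha
  have haPos : 0 < a := by simp [ha]; linarith
  set b : ℝ := min (a / 2) ε2 with hbdef
  have hbPos : 0 < b := lt_min (by linarith) hε2
  have hba : b ≤ a / 2 := min_le_left _ _
  have hbe : b ≤ ε2 := min_le_right _ _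
  have hG : Integrable (fun x : ℝ × ℝ => Real.exp (-b * |x.1|) * Real.exp (-b * |x.2|))
      (volume : Measure (ℝ × ℝ)) := by
    rw [Measure.volume_eq_prod]
    exact (integrable_exp_neg_abs_aux hbPos).mul_prod (integrable_exp_neg_abs_aux hbPos)
  refine hG.mono' ?_ ?_
  · apply Measurable.aestronglyMeasurable
    exact (measurable_fst.const_mul ε1 |>.add (measurable_snd.const_mul ε2)).exp.mul
      (((measurable_fst.exp.sub measurable_snd.exp).sub measurable_const).max measurable_const)
  · filter_upwards with x
    rcases le_or_gt (Real.exp x.1 - Real.exp x.2 - 1) 0 with h0 | h0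
    · rw [max_eq_right h0]
      simp only [mul_zero, norm_zero]
      positivity
    · rw [max_eq_left h0.le]
      have hx1 : 0 < x.1 := by
        have : (1 : ℝ) < Real.exp x.1 := by
          have := Real.exp_pos x.2; linarith
        exact Real.exp_lt_exp.mp (by simpa using this)
      have hx21 : x.2 < x.1 := by
        apply Real.exp_lt_exp.mp
        have := Real.exp_pos x.2; linarith
      have hnn : 0 ≤ Real.exp (ε1 * x.1 + ε2 * x.2) * (Real.exp x.1 - Real.exp x.2 - 1) := by
        positivity
      rw [Real.norm_of_nonneg hnn]
      have hb1 : Real.exp (ε1 * x.1 + ε2 * x.2) * (Real.exp x.1 - Real.exp x.2 - 1)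
          ≤ Real.exp (ε1 * x.1 + ε2 * x.2 + x.1) := by
        have h1 : Real.exp x.1 - Real.exp x.2 - 1 ≤ Real.exp x.1 := by
          have := Real.exp_pos x.2; linarith
        calc Real.exp (ε1 * x.1 + ε2 * x.2) * (Real.exp x.1 - Real.exp x.2 - 1)
            ≤ Real.exp (ε1 * x.1 + ε2 * x.2) * Real.exp x.1 :=
              mul_le_mul_of_nonneg_left h1 (Real.exp_pos _).le
          _ = Real.exp (ε1 * x.1 + ε2 * x.2 + x.1) := (Real.exp_add _ _).symm
      refine hb1.trans ?_
      rw [← Real.exp_add]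
      apply Real.exp_le_exp.mpr
      rw [abs_of_pos hx1]
      rcases le_or_gt 0 x.2 with h2 | h2
      · rw [abs_of_nonneg h2]
        nlinarith [mul_le_mul_of_nonneg_left hx21.le hε2.le,
          mul_le_mul_of_nonneg_left (le_of_lt hx21) hbPos.le]
      · rw [abs_of_neg h2]
        nlinarith
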